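/- Let Ω = {ω₁, ω₂} with ℙ{ω₁} = ℙ{ω₂} = 1/2, let 𝒢 = {G} with G(ω₁) = G(ω₂) = 2, and let ℋ = {H_t : t ∈ [0,1]} where H_t(ω₁) = 6 − 4t and H_t(ω₂) = 2 + 2t (the segment joining (2,4) and (6,2)). Then V(x) = 3x/5 for 0 ≤ x < 5/2, V(x) = x/3 + 2/3 for 5/2 ≤ x < 4, and V(x) = 2 for x ≥ 4; while V₁(x) = 0 for 0 ≤ x < 2, V₁(x) = 1 for 2 ≤ x < 4, and V₁(x) = 2 for x ≥ 4. Moreover the function W(x) := min(x/2, 2) is concave and satisfies W(x) ≥ V₁(x) for all x ≥ 0, yet W(2) = 1 < 6/5 = V(2); hence V is not the smallest concave majorant of V₁. -/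
import Mathlib


open MeasureTheory

namespace QH

variable {Ω : Type*} [MeasurableSpace Ω]

/-- The set of nonnegative measurable random variables. -/
def L0plus (Ω : Type*) [MeasurableSpace Ω] : Set (Ω → ℝ) :=
  {f | Measurable f ∧ ∀ ω, 0 ≤ f ω}

/-- A randomized test: a measurable function with values in `[0,1]`. -/
def IsRandTest (X : Ω → ℝ) : Prop :=
  Measurable X ∧ ∀ ω, X ω ∈ Set.Icc (0 : ℝ) 1

/-- The feasible randomized tests for significance level `x` and null collection `H`. -/
def Tests (μ : Measure Ω) (H : Set (Ω → ℝ)) (x : ℝ) : Set (Ω → ℝ) :=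
  {X | IsRandTest X ∧ ∀ h ∈ H, ∫ ω, h ω * X ω ∂μ ≤ x}

/-- The worst-case power of a test `X` over the alternative collection `G`. -/
noncomputable def powerInf (μ : Measure Ω) (G : Set (Ω → ℝ)) (X : Ω → ℝ) : ℝ :=
  sInf ((fun g => ∫ ω, g ω * X ω ∂μ) '' G)

/-- The value of the randomized composite hypothesis testing problem. -/
noncomputable def V (μ : Measure Ω) (G H : Set (Ω → ℝ)) (x : ℝ) : ℝ :=
  sSup (powerInf μ G '' Tests μ H x)

/-- The value of the pure composite hypothesis testing problem. -/
noncomputable def V1 (μ : Measure Ω) (G H : Set (Ω → ℝ)) (x : ℝ) : ℝ :=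
  sSup (powerInf μ G '' {X ∈ Tests μ H x | ∀ ω, X ω = 0 ∨ X ω = 1})

/-- The set `ℋₓ` of nonnegative random variables that satisfy the budget
constraint against every feasible randomized test. -/
def HxSet (μ : Measure Ω) (H : Set (Ω → ℝ)) (x : ℝ) : Set (Ω → ℝ) :=
  {h | h ∈ L0plus Ω ∧ ∀ X ∈ Tests μ H x, ∫ ω, h ω * X ω ∂μ ≤ x}

/-- A set of (nonnegative) random variables is closed under convergence in probability,
as a subset of `L⁰⁺`. -/
def ClosedInProb (μ : Measure Ω) (S : Set (Ω → ℝ)) : Prop :=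
  ∀ (f : ℕ → Ω → ℝ) (g : Ω → ℝ), (∀ n, f n ∈ S) → g ∈ L0plus Ω →
    TendstoInMeasure μ f Filter.atTop g → g ∈ S

/-- The closure of a set of random variables under convergence in probability. -/
def clProb (μ : Measure Ω) (S : Set (Ω → ℝ)) : Set (Ω → ℝ) :=
  {g | ∃ f : ℕ → Ω → ℝ, (∀ n, f n ∈ S) ∧ TendstoInMeasure μ f Filter.atTop g}

/-- Assumption (A1): `𝒢, ℋ ⊆ L⁰⁺`, `sup_{X ∈ 𝒢∪ℋ} 𝔼[X] < ∞`, and `𝒢` is convex and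
closed under convergence in probability. -/
def A1 (μ : Measure Ω) (G H : Set (Ω → ℝ)) : Prop :=
  G ⊆ L0plus Ω ∧ H ⊆ L0plus Ω ∧ (∀ f ∈ G ∪ H, Integrable f μ) ∧
  BddAbove ((fun f => ∫ ω, f ω ∂μ) '' (G ∪ H)) ∧
  Convex ℝ G ∧ ClosedInProb μ G

/-- The smallest σ-algebra making every random variable in `G ∪ H` measurable. -/
def sigmaGen (G H : Set (Ω → ℝ)) : MeasurableSpace Ω :=
  ⨆ f ∈ G ∪ H, MeasurableSpace.comap f inferInstance

/-- The Neyman–Pearson conditions at level `x` for the tuple `(Ĝ, Ĥ, â, X̂, B)`. -/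
def NPconds (μ : Measure Ω) (G H : Set (Ω → ℝ)) (x : ℝ)
    (Ghat Hhat : Ω → ℝ) (ahat : ℝ) (Xhat B : Ω → ℝ) : Prop :=
  Ghat ∈ G ∧ Hhat ∈ clProb μ (convexHull ℝ H) ∧ 0 ≤ ahat ∧ Xhat ∈ Tests μ H x ∧
  Measurable B ∧ (∀ ω, B ω ∈ Set.Icc (0 : ℝ) 1) ∧
  (∀ ω, Xhat ω = (if ahat * Hhat ω < Ghat ω then 1 else 0)
      + B ω * (if Ghat ω = ahat * Hhat ω then 1 else 0)) ∧
  (∀ h ∈ H, ∫ ω, h ω * Xhat ω ∂μ ≤ ∫ ω, Hhat ω * Xhat ω ∂μ) ∧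
  (∫ ω, Hhat ω * Xhat ω ∂μ = x) ∧
  (∀ g ∈ G, ∫ ω, Ghat ω * Xhat ω ∂μ ≤ ∫ ω, g ω * Xhat ω ∂μ)

end QH

/-- The uniform probability measure on the two-point space `Ω = {ω₁, ω₂}` (here `Bool`,
with `ω₁` encoded as `false` and `ω₂` as `true`). -/
noncomputable def QH.muTwo : MeasureTheory.Measure Bool :=
  (1 / 2 : ENNReal) • (MeasureTheory.Measure.dirac false + MeasureTheory.Measure.dirac true)

namespace QH


def GsX : Set (Bool → ℝ) := {fun _ => 2}
def HsX : Set (Bool → ℝ) :=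
  {h | ∃ t ∈ Set.Icc (0 : ℝ) 1, h = fun b => if b then 2 + 2 * t else 6 - 4 * t}

lemma integral_muTwo (f : Bool → ℝ) :
    ∫ ω, f ω ∂QH.muTwo = (f false + f true) / 2 := by
  rw [QH.muTwo, integral_smul_measure,
    integral_add_measure (Integrable.of_finite) (Integrable.of_finite),
    integral_dirac, integral_dirac]
  simp [ENNReal.toReal_div]
  ring

lemma powerInf_eq (X : Bool → ℝ) :
    QH.powerInf QH.muTwo GsX X = X false + X true := by
  rw [QH.powerInf, GsX, Set.image_singleton, csInf_singleton, integral_muTwo]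
  ring

lemma mem_tests {x : ℝ} {X : Bool → ℝ} :
    X ∈ QH.Tests QH.muTwo HsX x ↔
      (0 ≤ X false ∧ X false ≤ 1 ∧ 0 ≤ X true ∧ X true ≤ 1 ∧
        3 * X false + X true ≤ x ∧ X false + 2 * X true ≤ x) := by
  constructor
  · rintro ⟨⟨_, hI⟩, hH⟩
    have h0 := hH (fun b => if b then 2 + 2 * (0:ℝ) else 6 - 4 * 0)
      ⟨0, ⟨le_refl _, zero_le_one⟩, rfl⟩
    have h1 := hH (fun b => if b then 2 + 2 * (1:ℝ) else 6 - 4 * 1)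
      ⟨1, ⟨zero_le_one, le_refl _⟩, rfl⟩
    rw [integral_muTwo] at h0 h1
    simp only [if_true, if_false, Bool.false_eq_true] at h0 h1
    have hf := hI false
    have ht := hI true
    simp only [Set.mem_Icc] at hf ht
    refine ⟨hf.1, hf.2, ht.1, ht.2, by linarith, by linarith⟩
  · rintro ⟨h0, h1, h2, h3, h4, h5⟩
    refine ⟨⟨measurable_of_countable X, fun ω => ?_⟩, ?_⟩
    · cases ω <;> exact Set.mem_Icc.2 ⟨by assumption, by assumption⟩
    · rintro h ⟨t, ⟨ht0, ht1⟩, rfl⟩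
      rw [integral_muTwo]
      simp only [if_true, if_false, Bool.false_eq_true]
      nlinarith [mul_nonneg (by linarith : (0:ℝ) ≤ 1 - t)
          (by linarith : (0:ℝ) ≤ x - (3 * X false + X true)),
        mul_nonneg ht0 (by linarith : (0:ℝ) ≤ x - (X false + 2 * X true))]

lemma V_eq {x c : ℝ} (a b : ℝ) (ha0 : 0 ≤ a) (ha1 : a ≤ 1) (hb0 : 0 ≤ b) (hb1 : b ≤ 1)
    (h1 : 3 * a + b ≤ x) (h2 : a + 2 * b ≤ x) (hc : a + b = c)
    (hub : ∀ a' b' : ℝ, 0 ≤ a' → a' ≤ 1 → 0 ≤ b' → b' ≤ 1 →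
      3 * a' + b' ≤ x → a' + 2 * b' ≤ x → a' + b' ≤ c) :
    QH.V QH.muTwo GsX HsX x = c := by
  have hmem : (fun ω : Bool => if ω then b else a) ∈ QH.Tests QH.muTwo HsX x := by
    rw [mem_tests]; simp only [if_true, if_false, Bool.false_eq_true]
    exact ⟨ha0, ha1, hb0, hb1, h1, h2⟩
  have hval : QH.powerInf QH.muTwo GsX (fun ω : Bool => if ω then b else a) = c := by
    rw [powerInf_eq]; simp only [if_true, if_false, Bool.false_eq_true]; linarith
  have hub' : ∀ y ∈ QH.powerInf QH.muTwo GsX '' QH.Tests QH.muTwo HsX x, y ≤ c := by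
    rintro y ⟨X, hX, rfl⟩
    rw [powerInf_eq]
    rw [mem_tests] at hX
    exact hub _ _ hX.1 hX.2.1 hX.2.2.1 hX.2.2.2.1 hX.2.2.2.2.1 hX.2.2.2.2.2
  refine le_antisymm (csSup_le ⟨c, ⟨_, hmem, hval⟩⟩ hub')
    (le_csSup ⟨c, hub'⟩ ⟨_, hmem, hval⟩)

lemma V1_eq {x c : ℝ} (a b : ℝ) (ha : a = 0 ∨ a = 1) (hb : b = 0 ∨ b = 1)
    (h1 : 3 * a + b ≤ x) (h2 : a + 2 * b ≤ x) (hc : a + b = c)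
    (hub : ∀ a' b' : ℝ, (a' = 0 ∨ a' = 1) → (b' = 0 ∨ b' = 1) →
      3 * a' + b' ≤ x → a' + 2 * b' ≤ x → a' + b' ≤ c) :
    QH.V1 QH.muTwo GsX HsX x = c := by
  have ha0 : 0 ≤ a := by rcases ha with rfl | rfl <;> norm_num
  have ha1 : a ≤ 1 := by rcases ha with rfl | rfl <;> norm_num
  have hb0 : 0 ≤ b := by rcases hb with rfl | rfl <;> norm_num
  have hb1 : b ≤ 1 := by rcases hb with rfl | rfl <;> norm_num
  have hmem : (fun ω : Bool => if ω then b else a) ∈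
      {X ∈ QH.Tests QH.muTwo HsX x | ∀ ω, X ω = 0 ∨ X ω = 1} := by
    constructor
    · rw [mem_tests]; simp only [if_true, if_false, Bool.false_eq_true]
      exact ⟨ha0, ha1, hb0, hb1, h1, h2⟩
    · intro ω; cases ω <;> simpa
  have hval : QH.powerInf QH.muTwo GsX (fun ω : Bool => if ω then b else a) = c := by
    rw [powerInf_eq]; simp only [if_true, if_false, Bool.false_eq_true]; linarith
  have hub' : ∀ y ∈ QH.powerInf QH.muTwo GsX ''
      {X ∈ QH.Tests QH.muTwo HsX x | ∀ ω, X ω = 0 ∨ X ω = 1}, y ≤ c := by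
    rintro y ⟨X, ⟨hX, hp⟩, rfl⟩
    rw [powerInf_eq]
    rw [mem_tests] at hX
    exact hub _ _ (hp false) (hp true) hX.2.2.2.2.1 hX.2.2.2.2.2
  refine le_antisymm (csSup_le ⟨c, ⟨_, hmem, hval⟩⟩ hub')
    (le_csSup ⟨c, hub'⟩ ⟨_, hmem, hval⟩)


end QH

/-- On `Ω = {ω₁, ω₂}` with `ℙ{ω₁} = ℙ{ω₂} = 1/2`, `𝒢 = {(2,2)}` and
`ℋ` the segment joining `(2,4)` and `(6,2)` (i.e. `H_t(ω₁) = 6 − 4t`,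
`H_t(ω₂) = 2 + 2t`, `t ∈ [0,1]`), the values of `V` and `V₁` are as tabulated, and the
concave function `W(x) = min(x/2, 2)` majorizes `V₁` yet `W(2) = 1 < 6/5 = V(2)`; hence
`V` is not the smallest concave majorant of `V₁`. -/
theorem stmt_19 :
    let Gs : Set (Bool → ℝ) := {fun _ => 2}
    let Hs : Set (Bool → ℝ) :=
      {h | ∃ t ∈ Set.Icc (0 : ℝ) 1, h = fun b => if b then 2 + 2 * t else 6 - 4 * t}
    let W : ℝ → ℝ := fun x => min (x / 2) 2
    (∀ x : ℝ, 0 ≤ x → x < 5 / 2 → QH.V QH.muTwo Gs Hs x = 3 * x / 5) ∧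
    (∀ x : ℝ, 5 / 2 ≤ x → x < 4 → QH.V QH.muTwo Gs Hs x = x / 3 + 2 / 3) ∧
    (∀ x : ℝ, 4 ≤ x → QH.V QH.muTwo Gs Hs x = 2) ∧
    (∀ x : ℝ, 0 ≤ x → x < 2 → QH.V1 QH.muTwo Gs Hs x = 0) ∧
    (∀ x : ℝ, 2 ≤ x → x < 4 → QH.V1 QH.muTwo Gs Hs x = 1) ∧
    (∀ x : ℝ, 4 ≤ x → QH.V1 QH.muTwo Gs Hs x = 2) ∧
    ConcaveOn ℝ Set.univ W ∧
    (∀ x : ℝ, 0 ≤ x → QH.V1 QH.muTwo Gs Hs x ≤ W x) ∧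
    W 2 = 1 ∧ QH.V QH.muTwo Gs Hs 2 = 6 / 5 ∧ W 2 < QH.V QH.muTwo Gs Hs 2 := by
  intro Gs Hs W
  have hV1 : ∀ x : ℝ, 0 ≤ x → x < 5 / 2 → QH.V QH.muTwo Gs Hs x = 3 * x / 5 := by
    intro x h0 h1
    exact QH.V_eq (x / 5) (2 * x / 5) (by linarith) (by linarith) (by linarith)
      (by linarith) (by linarith) (by linarith) (by ring)
      (fun a b _ _ _ _ g1 g2 => by linarith)
  have hV2 : ∀ x : ℝ, 5 / 2 ≤ x → x < 4 → QH.V QH.muTwo Gs Hs x = x / 3 + 2 / 3 := by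
    intro x h0 h1
    exact QH.V_eq ((x - 1) / 3) 1 (by linarith) (by linarith) (by linarith)
      (by linarith) (by linarith) (by linarith) (by ring)
      (fun a b _ _ _ hb1 g1 g2 => by linarith)
  have hV3 : ∀ x : ℝ, 4 ≤ x → QH.V QH.muTwo Gs Hs x = 2 := by
    intro x h0
    exact QH.V_eq 1 1 (by linarith) le_rfl (by linarith) le_rfl (by linarith)
      (by linarith) (by norm_num) (fun a b _ ha1 _ hb1 _ _ => by linarith)
  have hW1 : ∀ x : ℝ, 0 ≤ x → x < 2 → QH.V1 QH.muTwo Gs Hs x = 0 := by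
    intro x h0 h1
    refine QH.V1_eq 0 0 (Or.inl rfl) (Or.inl rfl) (by linarith) (by linarith)
      (by norm_num) ?_
    rintro a b (rfl | rfl) (rfl | rfl) g1 g2 <;> linarith
  have hW2 : ∀ x : ℝ, 2 ≤ x → x < 4 → QH.V1 QH.muTwo Gs Hs x = 1 := by
    intro x h0 h1
    refine QH.V1_eq 0 1 (Or.inl rfl) (Or.inr rfl) (by linarith) (by linarith)
      (by norm_num) ?_
    rintro a b (rfl | rfl) (rfl | rfl) g1 g2 <;> linarith
  have hW3 : ∀ x : ℝ, 4 ≤ x → QH.V1 QH.muTwo Gs Hs x = 2 := by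
    intro x h0
    refine QH.V1_eq 1 1 (Or.inr rfl) (Or.inr rfl) (by linarith) (by linarith)
      (by norm_num) ?_
    rintro a b (rfl | rfl) (rfl | rfl) g1 g2 <;> linarith
  have hWconc : ConcaveOn ℝ Set.univ W := by
    refine ⟨convex_univ, ?_⟩
    intro p _ q _ a b ha hb hab
    simp only [W, smul_eq_mul]
    have h1 : a * min (p / 2) 2 ≤ a * (p / 2) :=
      mul_le_mul_of_nonneg_left (min_le_left _ _) ha
    have h2 : b * min (q / 2) 2 ≤ b * (q / 2) :=
      mul_le_mul_of_nonneg_left (min_le_left _ _) hb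
    have h3 : a * min (p / 2) 2 ≤ a * 2 :=
      mul_le_mul_of_nonneg_left (min_le_right _ _) ha
    have h4 : b * min (q / 2) 2 ≤ b * 2 :=
      mul_le_mul_of_nonneg_left (min_le_right _ _) hb
    refine le_min (by linarith) (by nlinarith)
  have hmaj : ∀ x : ℝ, 0 ≤ x → QH.V1 QH.muTwo Gs Hs x ≤ W x := by
    intro x h0
    rcases lt_or_ge x 2 with h | h
    · rw [hW1 x h0 h]
      exact le_min (by linarith) (by norm_num)
    · rcases lt_or_ge x 4 with h4 | h4
      · rw [hW2 x h h4]
        exact le_min (by linarith) (by norm_num)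
      · rw [hW3 x h4]
        exact le_min (by linarith) le_rfl
  have hW2val : W 2 = 1 := by norm_num [W]
  have hV2val : QH.V QH.muTwo Gs Hs 2 = 6 / 5 := by
    rw [hV1 2 (by norm_num) (by norm_num)]; norm_num
  exact ⟨hV1, hV2, hV3, hW1, hW2, hW3, hWconc, hmaj, hW2val, hV2val, by
    rw [hW2val, hV2val]; norm_num⟩
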